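/- arXiv:2012.00864 — 2 statements merged into one kernel-verified Lean document; each statement's English description precedes it below -/
import Mathlib

section
/- Let R be an associative unital ring and p a prime. Let x ∈ R, and suppose there exist m ≥ 1 and k ≥ 0 such that the additive commutator map ad_x : R → R defined by ad_x(r) = x·r − r·x satisfies: (i) the m-fold iterate ad_x^m is the zero map, and (ii) p^k · (x·r − r·x) = 0 for all r ∈ R (integer scalar multiplication). Then for every natural number N ≥ k + m, the element x^{p^N} is central in R, i.e. x^{p^N}·r = r·x^{p^N} for all r ∈ R. -/
lemma pk_dvd_choose {p : ℕ} (hp : p.Prime) {N k m i : ℕ} (hi : 1 ≤ i) (him : i < m)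
    (hN : k + m ≤ N) : p ^ k ∣ (p ^ N).choose i := by
  have hppos := hp.pos
  have hmN : m ≤ N := by omega
  have hiN : i ≤ p ^ N := by
    have h1 : m ≤ p ^ m := Nat.le_of_lt (Nat.lt_pow_self hp.one_lt (n := m))
    have h2 : p ^ m ≤ p ^ N := Nat.pow_le_pow_right hppos hmN
    omega
  have hC : (p ^ N).choose i ≠ 0 := (Nat.choose_pos hiN).ne'
  have hine : i ≠ 0 := by omega
  -- key divisibility: p^N ∣ i * choose (p^N) i
  have key : p ^ N ∣ (p ^ N).choose i * i := by
    obtain ⟨n', hn'⟩ : ∃ n', p ^ N = n' + 1 :=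
      ⟨p ^ N - 1, by have := Nat.one_le_pow N p hppos; omega⟩
    obtain ⟨i', rfl⟩ : ∃ i', i = i' + 1 := ⟨i - 1, by omega⟩
    have := Nat.add_one_mul_choose_eq n' i'
    rw [← hn'] at this
    exact ⟨n'.choose i', this.symm⟩
  have hfac : N ≤ ((p ^ N).choose i * i).factorization p := by
    rw [← Nat.Prime.pow_dvd_iff_le_factorization hp (mul_ne_zero hC hine)]
    exact key
  rw [Nat.factorization_mul hC hine, Finsupp.add_apply] at hfac
  have hfi : i.factorization p < m := by
    have hdvd : p ^ (i.factorization p) ∣ i := Nat.ordProj_dvd i p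
    have h1 : p ^ (i.factorization p) ≤ i := Nat.le_of_dvd (by omega) hdvd
    have h2 : m ≤ p ^ m := Nat.le_of_lt (Nat.lt_pow_self hp.one_lt (n := m))
    have : p ^ (i.factorization p) < p ^ m := by omega
    exact (Nat.pow_lt_pow_iff_right hp.one_lt).mp this
  exact (Nat.Prime.pow_dvd_iff_le_factorization hp hC).mpr (by omega)

/-- **Centrality of `p`-power powers.**
Let `R` be an associative unital ring and `p` a prime. Let `x ∈ R` and suppose there
are `m ≥ 1` and `k ≥ 0` such that the additive commutator map `ad_x(r) = x·r − r·x`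
satisfies: (i) its `m`-fold iterate is the zero map, and (ii) `p ^ k • (x·r − r·x) = 0`
for all `r` (integer scalar multiplication). Then for every `N ≥ k + m` the element
`x ^ (p ^ N)` is central in `R`. -/
theorem pow_p_pow_central (R : Type*) [Ring R] (p : ℕ) (hp : p.Prime) (x : R)
    (m k : ℕ) (hm : 1 ≤ m)
    (hnil : ∀ r : R, (fun r : R => x * r - r * x)^[m] r = 0)
    (htors : ∀ r : R, (p ^ k : ℤ) • (x * r - r * x) = 0) :
    ∀ N : ℕ, k + m ≤ N → ∀ r : R, x ^ p ^ N * r = r * x ^ p ^ N := by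
  intro N hN r
  set L : AddMonoid.End R := AddMonoidHom.mulLeft x with hL
  set Rm : AddMonoid.End R := AddMonoidHom.mulRight x with hRm
  set A : AddMonoid.End R := L - Rm with hA
  have happly : ∀ s : R, A s = x * s - s * x := by
    intro s
    show L s - Rm s = _
    rfl
  have hLR : Commute L Rm := by
    apply AddMonoidHom.ext; intro s
    show x * (s * x) = (x * s) * x
    rw [mul_assoc]
  have hApow : ∀ n (s : R), (A ^ n) s = (fun r : R => x * r - r * x)^[n] s := by
    intro n
    induction n with
    | zero => intro s; simp
    | succ n ih =>
      intro s
      rw [pow_succ, Function.iterate_succ_apply]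
      show (A ^ n) (A s) = _
      rw [ih (A s), happly s]
  have hAm : A ^ m = 0 := by
    apply AddMonoidHom.ext; intro s
    refine (hApow m s).trans ((hnil s).trans ?_)
    rfl
  have hAtor : (p ^ k : ℕ) • A = 0 := by
    apply AddMonoidHom.ext; intro s
    have h1 := htors s
    rw [show ((p : ℤ)) ^ k = ((p ^ k : ℕ) : ℤ) by push_cast; ring, natCast_zsmul] at h1
    show p ^ k • A s = (0 : AddMonoid.End R) s
    rw [happly]
    exact h1
  have hc : Commute A Rm := hLR.sub_left (Commute.refl Rm)
  have key : L ^ (p ^ N) = Rm ^ (p ^ N) := by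
    have hsum := hc.add_pow (p ^ N)
    rw [sub_add_cancel] at hsum
    rw [hsum, Finset.sum_eq_single 0]
    · simp
    · intro i _ hi0
      by_cases him : m ≤ i
      · have : A ^ i = 0 := by
          rw [show i = m + (i - m) by omega, pow_add, hAm, zero_mul]
        rw [this, zero_mul, zero_mul]
      · obtain ⟨c, hc'⟩ := pk_dvd_choose hp (by omega) (by omega : i < m) hN
        rw [← nsmul_eq_mul' (A ^ i * Rm ^ (p ^ N - i)) ((p ^ N).choose i), hc',
          mul_comm (p ^ k) c, mul_smul, show i = 1 + (i - 1) by omega, pow_add, pow_one,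
          mul_assoc, ← smul_mul_assoc, hAtor, zero_mul]
        exact nsmul_zero c
    · intro h; simp at h
  have hLpow : ∀ n (s : R), (L ^ n) s = x ^ n * s := by
    intro n
    induction n with
    | zero => intro s; simp
    | succ n ih =>
      intro s
      rw [pow_succ]
      show (L ^ n) (x * s) = _
      rw [ih, pow_succ, mul_assoc]
  have hRpow : ∀ n (s : R), (Rm ^ n) s = s * x ^ n := by
    intro n
    induction n with
    | zero => intro s; simp
    | succ n ih =>
      intro s
      rw [pow_succ]
      show (Rm ^ n) (s * x) = _
      rw [ih, mul_assoc, ← pow_succ']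
  have := congrArg (fun f : AddMonoid.End R => f r) key
  simpa [hLpow, hRpow] using this
end

section
/- Let p be a prime, n ≥ 1 an integer, and write ℤ_(p) for the localization of ℤ at the prime ideal (p). Let A = ℤ_(p)[x_1, x_2, x_3, …] be the polynomial ring on countably many variables, graded so that x_j is homogeneous of degree 2j, and let B = ℤ_(p)[v_1, …, v_n] be the polynomial ring graded so that v_i is homogeneous of degree 2(p^i − 1). Let φ : A → B be a degree-preserving ℤ_(p)-algebra homomorphism satisfying φ(x_{p^i − 1}) = v_i for 1 ≤ i ≤ n. Then: (a) for every index j ≥ 1 not of the form p^i − 1 with 1 ≤ i ≤ n, there exists a homogeneous element g_j ∈ A of degree 2j lying in the ℤ_(p)-subalgebra generated by the variables x_{p−1}, x_{p²−1}, …, x_{p^n−1}, such that φ(x_j − g_j) = 0; and (b) the ℤ_(p)-algebra endomorphism ψ of A determined by ψ(x_{p^i−1}) = x_{p^i−1} for 1 ≤ i ≤ n and ψ(x_j) = x_j − g_j for all other indices j is a degree-preserving automorphism of A. -/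
open MvPolynomial

/-- `ℤ_(p)`: the localization of the integers at the prime ideal `(p)`. -/
noncomputable abbrev ZpLoc (p : ℕ) (hp : p.Prime) : Type :=
  @Localization.AtPrime ℤ _ (Ideal.span {(p : ℤ)})
    ((Ideal.span_singleton_prime (by exact_mod_cast hp.ne_zero)).mpr
      (Nat.prime_iff_prime_int.mp hp))

/-- The grading on `A = ℤ_(p)[x₁, x₂, …]`: the variable `x_j` has degree `2j`. -/
def wgtA : ℕ+ → ℕ := fun j => 2 * (j : ℕ)

/-- The grading on `B = ℤ_(p)[v₁, …, v_n]`: the variable `v_i` (for `1 ≤ i ≤ n`,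
represented by `i - 1 : Fin n`) has degree `2(p^i − 1)`. -/
def wgtB (p n : ℕ) : Fin n → ℕ := fun i => 2 * (p ^ ((i : ℕ) + 1) - 1)

/-- The index `p^i − 1` (for `1 ≤ i ≤ n`, represented by `i - 1 : Fin n`) of the
variable `x_{p^i − 1}` of `A`. -/
def vIdx (p : ℕ) (hp : p.Prime) {n : ℕ} (i : Fin n) : ℕ+ :=
  ⟨p ^ ((i : ℕ) + 1) - 1, by
    have h2 : 2 ≤ p := hp.two_le
    have hle : p ≤ p ^ ((i : ℕ) + 1) := Nat.le_self_pow (Nat.succ_ne_zero _) p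
    omega⟩

/-- A power of a weighted homogeneous polynomial is weighted homogeneous. -/
lemma isWeightedHomogeneous_pow' {τ R : Type*} [CommSemiring R] {w : τ → ℕ}
    {q : MvPolynomial τ R} {e : ℕ} (hq : q.IsWeightedHomogeneous w e) (k : ℕ) :
    (q ^ k).IsWeightedHomogeneous w (k * e) := by
  induction k with
  | zero => simpa using isWeightedHomogeneous_one R w
  | succ k ih =>
      rw [pow_succ]
      have := ih.mul hq
      convert this using 1
      ring

/-- Substituting weighted homogeneous polynomials of matching degrees into a weighted
homogeneous polynomial yields a weighted homogeneous polynomial of the same degree. -/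
lemma aeval_isWeightedHomogeneous {σ τ R : Type*} [CommSemiring R]
    (w : σ → ℕ) (w' : τ → ℕ) (h : σ → MvPolynomial τ R)
    (hh : ∀ j, (h j).IsWeightedHomogeneous w' (w j))
    {d : ℕ} {f : MvPolynomial σ R} (hf : f.IsWeightedHomogeneous w d) :
    (aeval h f).IsWeightedHomogeneous w' d := by
  rw [f.as_sum, map_sum]
  apply IsWeightedHomogeneous.sum
  intro m hm
  rw [aeval_monomial]
  have h0 : (algebraMap R (MvPolynomial τ R) (coeff m f)).IsWeightedHomogeneous w' 0 :=
    isWeightedHomogeneous_C w' _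
  have hprod : (m.prod fun i k => h i ^ k).IsWeightedHomogeneous w'
      (Finsupp.weight w m) := by
    rw [Finsupp.prod, Finsupp.weight_apply, Finsupp.sum]
    exact IsWeightedHomogeneous.prod m.support _ _
      (fun i _ => by simpa [smul_eq_mul] using isWeightedHomogeneous_pow' (hh i) (m i))
  have hmul := h0.mul hprod
  rw [zero_add] at hmul
  rwa [hf (mem_support_iff.mp hm)] at hmul


/-- Difference of weighted homogeneous polynomials of the same degree. -/
lemma MvPolynomial.IsWeightedHomogeneous.sub' {σ R : Type*} [CommRing R] {w : σ → ℕ}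
    {a b : MvPolynomial σ R} {d : ℕ} (ha : a.IsWeightedHomogeneous w d)
    (hb : b.IsWeightedHomogeneous w d) : (a - b).IsWeightedHomogeneous w d := by
  intro m hm
  rw [MvPolynomial.coeff_sub] at hm
  by_cases hc : MvPolynomial.coeff m a = 0
  · have : MvPolynomial.coeff m b ≠ 0 := by
      intro h0; rw [hc, h0, sub_zero] at hm; exact hm rfl
    exact hb this
  · exact ha hc

/-- If substituting `X k + g k` and `X k - g k` both fix every `g j`, then the
substitution `X j ↦ X j - g j` is bijective. -/
lemma bijective_aeval_sub {σ R : Type*} [CommRing R] (g : σ → MvPolynomial σ R)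
    (h1 : ∀ j, aeval (fun k => (X k : MvPolynomial σ R) + g k) (g j) = g j)
    (h2 : ∀ j, aeval (fun k => (X k : MvPolynomial σ R) - g k) (g j) = g j) :
    Function.Bijective (aeval (R := R) fun j => (X j : MvPolynomial σ R) - g j) := by
  have c1 : (aeval (fun k => (X k : MvPolynomial σ R) + g k)).comp
      (aeval fun j => (X j : MvPolynomial σ R) - g j) = AlgHom.id R _ := by
    apply MvPolynomial.algHom_ext
    intro j
    simp only [AlgHom.comp_apply, aeval_X, map_sub, AlgHom.id_apply, h1]
    exact add_sub_cancel_right _ _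
  have c2 : (aeval (fun j => (X j : MvPolynomial σ R) - g j)).comp
      (aeval fun k => (X k : MvPolynomial σ R) + g k) = AlgHom.id R _ := by
    apply MvPolynomial.algHom_ext
    intro j
    simp only [AlgHom.comp_apply, aeval_X, map_add, AlgHom.id_apply, h2]
    exact sub_add_cancel _ _
  have l1 : ∀ x, aeval (fun k => (X k : MvPolynomial σ R) + g k)
      (aeval (fun j => (X j : MvPolynomial σ R) - g j) x) = x := fun x => by
    simpa only [AlgHom.coe_comp, Function.comp_apply, AlgHom.id_apply]
      using AlgHom.congr_fun c1 x
  have l2 : ∀ x, aeval (fun j => (X j : MvPolynomial σ R) - g j)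
      (aeval (fun k => (X k : MvPolynomial σ R) + g k) x) = x := fun x => by
    simpa only [AlgHom.coe_comp, Function.comp_apply, AlgHom.id_apply]
      using AlgHom.congr_fun c2 x
  exact Function.bijective_iff_has_inverse.mpr
    ⟨aeval (fun k => (X k : MvPolynomial σ R) + g k), l1, l2⟩

set_option maxHeartbeats 800000 in
/-- **Change of polynomial generators adapted to a form of `BP⟨n⟩`.**
Let `A = ℤ_(p)[x₁, x₂, …]` with `x_j` of degree `2j`, and `B = ℤ_(p)[v₁, …, v_n]`
with `v_i` of degree `2(p^i − 1)`.  Let `φ : A → B` be a degree-preserving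
`ℤ_(p)`-algebra homomorphism with `φ(x_{p^i − 1}) = v_i` for `1 ≤ i ≤ n`.  Then there
is a family `g_j` (with `g_{p^i−1} = 0`) such that:

(a) for every `j` not of the form `p^i − 1` with `1 ≤ i ≤ n`, the element `g_j` is
homogeneous of degree `2j`, lies in the `ℤ_(p)`-subalgebra generated by
`x_{p−1}, …, x_{p^n−1}`, and `φ(x_j − g_j) = 0`;

(b) the `ℤ_(p)`-algebra endomorphism `ψ` of `A` with `ψ(x_j) = x_j − g_j` (so
`ψ(x_{p^i−1}) = x_{p^i−1}`) is a degree-preserving automorphism of `A`. -/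
theorem new_generators_for_form (p n : ℕ) (hp : p.Prime) (hn : 1 ≤ n)
    (φ : MvPolynomial ℕ+ (ZpLoc p hp) →ₐ[ZpLoc p hp] MvPolynomial (Fin n) (ZpLoc p hp))
    (hφdeg : ∀ (d : ℕ) (f : MvPolynomial ℕ+ (ZpLoc p hp)),
      f.IsWeightedHomogeneous wgtA d → (φ f).IsWeightedHomogeneous (wgtB p n) d)
    (hφv : ∀ i : Fin n, φ (X (vIdx p hp i)) = X i) :
    ∃ g : ℕ+ → MvPolynomial ℕ+ (ZpLoc p hp),
      (∀ i : Fin n, g (vIdx p hp i) = 0) ∧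
      (∀ j : ℕ+, (¬ ∃ i : Fin n, j = vIdx p hp i) →
        (g j).IsWeightedHomogeneous wgtA (2 * (j : ℕ)) ∧
        g j ∈ Algebra.adjoin (ZpLoc p hp)
          (Set.range fun i : Fin n => (X (vIdx p hp i) : MvPolynomial ℕ+ (ZpLoc p hp))) ∧
        φ (X j - g j) = 0) ∧
      Function.Bijective
        (aeval (R := ZpLoc p hp)
          (fun j : ℕ+ => (X j : MvPolynomial ℕ+ (ZpLoc p hp)) - g j)) ∧
      (∀ (d : ℕ) (f : MvPolynomial ℕ+ (ZpLoc p hp)),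
        f.IsWeightedHomogeneous wgtA d →
        (aeval (fun j : ℕ+ => (X j : MvPolynomial ℕ+ (ZpLoc p hp)) - g j)
          f).IsWeightedHomogeneous wgtA d) := by
  classical
  set R := ZpLoc p hp with hR
  set s : MvPolynomial (Fin n) R →ₐ[R] MvPolynomial ℕ+ R := rename (vIdx p hp) with hs
  set g : ℕ+ → MvPolynomial ℕ+ R :=
    fun j => if ∃ i : Fin n, j = vIdx p hp i then 0 else s (φ (X j)) with hg
  have hgv : ∀ i : Fin n, g (vIdx p hp i) = 0 := fun i => if_pos ⟨i, rfl⟩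
  -- s preserves homogeneity
  have hshom : ∀ (d : ℕ) (q : MvPolynomial (Fin n) R), q.IsWeightedHomogeneous (wgtB p n) d →
      (s q).IsWeightedHomogeneous wgtA d := by
    intro d q hq
    have : s q = aeval (X ∘ vIdx p hp) q := by
      rw [hs]; exact AlgHom.congr_fun (MvPolynomial.algHom_ext fun i => by simp [rename_X]) q
    rw [this]
    exact aeval_isWeightedHomogeneous (wgtB p n) wgtA _
      (fun i => isWeightedHomogeneous_X R wgtA (vIdx p hp i)) hq
  -- g j is homogeneous of degree 2j
  have hghom : ∀ j : ℕ+, (g j).IsWeightedHomogeneous wgtA (2 * (j : ℕ)) := by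
    intro j
    by_cases hj : ∃ i : Fin n, j = vIdx p hp i
    · rw [hg]; simp only [if_pos hj]
      intro d hd; exact absurd rfl hd
    · rw [hg]; simp only [if_neg hj]
      exact hshom _ _ (hφdeg (2 * (j : ℕ)) _ (isWeightedHomogeneous_X R wgtA j))
  -- membership in the adjoined subalgebra
  have hmem : ∀ q : MvPolynomial (Fin n) R, s q ∈ Algebra.adjoin R
      (Set.range fun i : Fin n => (X (vIdx p hp i) : MvPolynomial ℕ+ R)) := by
    intro q
    have hq : q ∈ Algebra.adjoin R (Set.range (X : Fin n → MvPolynomial (Fin n) R)) := by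
      rw [MvPolynomial.adjoin_range_X]; trivial
    have him : s q ∈ (Algebra.adjoin R (Set.range (X : Fin n → MvPolynomial (Fin n) R))).map s :=
      Subalgebra.mem_map.mpr ⟨q, hq, rfl⟩
    rw [AlgHom.map_adjoin] at him
    have hset : (s '' Set.range (X : Fin n → MvPolynomial (Fin n) R)) =
        Set.range fun i : Fin n => (X (vIdx p hp i) : MvPolynomial ℕ+ R) := by
      rw [← Set.range_comp]
      refine congrArg Set.range (funext fun i => ?_)
      simp [hs, rename_X]
    rwa [hset] at him
  -- φ ∘ s = id
  have hφs : ∀ q : MvPolynomial (Fin n) R, φ (s q) = q := by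
    intro q
    have hcomp : φ.comp s = AlgHom.id R _ := by
      apply MvPolynomial.algHom_ext
      intro i
      simp [hs, rename_X, hφv]
      rfl
    simpa using AlgHom.congr_fun hcomp q
  -- key substitution lemma: endomorphisms fixing the v-variables fix each g j
  have key : ∀ (F : ℕ+ → MvPolynomial ℕ+ R),
      (∀ i : Fin n, F (vIdx p hp i) = X (vIdx p hp i)) → ∀ j : ℕ+, aeval F (g j) = g j := by
    intro F hF j
    by_cases hj : ∃ i : Fin n, j = vIdx p hp i
    · rw [hg]; simp only [if_pos hj]; simp
    · rw [hg]; simp only [if_neg hj]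
      rw [hs, aeval_rename]
      have hFc : F ∘ vIdx p hp = fun i : Fin n => (X (vIdx p hp i) : MvPolynomial ℕ+ R) :=
        funext fun i => hF i
      rw [hFc]
      exact AlgHom.congr_fun (MvPolynomial.algHom_ext fun i => by simp [rename_X]) _
  have hFplus : ∀ i : Fin n, (X (vIdx p hp i) : MvPolynomial ℕ+ R) + g (vIdx p hp i) =
      X (vIdx p hp i) := fun i => by rw [hgv i, add_zero]
  have hFminus : ∀ i : Fin n, (X (vIdx p hp i) : MvPolynomial ℕ+ R) - g (vIdx p hp i) =
      X (vIdx p hp i) := fun i => by rw [hgv i, sub_zero]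
  refine ⟨g, hgv, ?_, ?_, ?_⟩
  · intro j hj
    refine ⟨hghom j, ?_, ?_⟩
    · rw [hg]; simp only [if_neg hj]; exact hmem _
    · rw [map_sub]
      rw [hg]; simp only [if_neg hj]
      rw [hφs, sub_self]
  · -- bijectivity
    exact bijective_aeval_sub g (fun j => key _ hFplus j) (fun j => key _ hFminus j)
  · -- degree preservation
    intro d f hf
    apply aeval_isWeightedHomogeneous wgtA wgtA _ _ hf
    intro j
    exact (isWeightedHomogeneous_X R wgtA j).sub' (hghom j)
end
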